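/- If a binary string S of length n has an SLP of size g, then Δ(S) = "(" · δ(S[1])···δ(S[n]) · ")"^{k+1} (where δ(0) = "()", δ(1) = "((", k = 2·rank₁(S,n)) has an SLP of size O(g + log n). Concretely, an SLP for Δ(S) of size at most g + 2⌈log₂(k+1)⌉ + 4 exists. -/

import Mathlib

/-- A straight-line program over alphabet `α`: nonterminals are `0,…,g−1`; each has a
rule which is either binary `X → Y Z` (with `Y, Z` smaller than `X`, ensuring
acyclicity) or terminal `X → a`. The size of the SLP is `g`, its number of
nonterminals. -/
structure SLP (α : Type*) where
  g : ℕ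
  rhs : Fin g → (Fin g × Fin g) ⊕ α
  acyclic : ∀ X Y Z : Fin g, rhs X = Sum.inl (Y, Z) → Y < X ∧ Z < X

/-- The string derived by a nonterminal. -/
def SLP.expand {α : Type*} (P : SLP α) (X : Fin P.g) : List α :=
  match h : P.rhs X with
  | Sum.inr a => [a]
  | Sum.inl (Y, Z) => P.expand Y ++ P.expand Z
termination_by X.val
decreasing_by
  · exact (P.acyclic X Y Z h).1
  · exact (P.acyclic X Y Z h).2

/-- The SLP generates `S` if some nonterminal (the start symbol) derives `S`. -/
def SLP.Generates {α : Type*} (P : SLP α) (S : List α) : Prop := ∃ X, P.expand X = S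

/-- δ(0) = "()", δ(1) = "((". A parenthesis is `true` iff it is '('. -/
def δp (b : Bool) : List Bool := if b then [true, true] else [true, false]

/-- Δ(S) = "(" · δ(S[1])···δ(S[n]) · ")"^{k+1}, where k = 2·rank₁(S,n). -/
def ΔEx (S : List Bool) : List Bool :=
  true :: (S.flatMap δp ++ List.replicate (2 * S.count true + 1) false)

namespace St13

abbrev Rule (α : Type*) := (ℕ × ℕ) ⊕ α

def evalL {α : Type*} (L : List (Rule α)) : ℕ → List α
  | i =>
    match L[i]? with
    | some (Sum.inr a) => [a]
    | some (Sum.inl (y, z)) =>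
        if _ : y < i ∧ z < i then evalL L y ++ evalL L z else []
    | none => []
termination_by i => i
decreasing_by
  · exact ‹y < i ∧ z < i›.1
  · exact ‹y < i ∧ z < i›.2

theorem evalL_prefix {α : Type*} {L L' : List (Rule α)} (h : L <+: L') :
    ∀ i, i < L.length → evalL L' i = evalL L i := by
  intro i
  induction i using Nat.strong_induction_on with
  | _ i ih =>
    intro hi
    obtain ⟨t, rfl⟩ := h
    rw [evalL, evalL, List.getElem?_append_left hi]
    rcases hL : L[i]? with _ | r
    · simp
    · rcases r with ⟨y, z⟩ | a
      · simp only []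
        split
        · next hc =>
            rw [ih y (hc.1) (hc.1.trans hi), ih z (hc.2) (hc.2.trans hi)]
        · rfl
      · rfl

abbrev WF {α : Type*} (L : List (Rule α)) : Prop :=
  ∀ (i y z : ℕ), L[i]? = some (Sum.inl (y, z)) → y < i ∧ z < i

def ofList {α : Type*} (L : List (Rule α)) (hwf : WF L) : SLP α where
  g := L.length
  rhs X :=
    match h : L[X.1]? with
    | some (Sum.inr a) => Sum.inr a
    | some (Sum.inl (y, z)) =>
        Sum.inl (⟨y, (hwf _ _ _ h).1.trans X.2⟩, ⟨z, (hwf _ _ _ h).2.trans X.2⟩)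
    | none => absurd (List.getElem?_eq_none_iff.mp h) (Nat.not_le.mpr X.2)
  acyclic := by
    intro X Y Z hXYZ
    split at hXYZ
    · exact absurd hXYZ (by simp)
    · next y z h =>
        rw [Sum.inl.injEq, Prod.mk.injEq] at hXYZ
        obtain ⟨h1, h2⟩ := hXYZ
        constructor
        · exact h1 ▸ Fin.mk_lt_mk.mpr ((by exact (hwf _ _ _ h).1) : y < X.1)
        · exact h2 ▸ Fin.mk_lt_mk.mpr (hwf _ _ _ h).2
    · next h => exact absurd (List.getElem?_eq_none_iff.mp h) (Nat.not_le.mpr X.2)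

theorem expand_ofList {α : Type*} (L : List (Rule α)) (hwf : WF L) (X : Fin L.length) :
    (ofList L hwf).expand X = evalL L X.1 := by
  obtain ⟨i, hi⟩ := X
  induction i using Nat.strong_induction_on with
  | _ i ih =>
    erw [SLP.expand, evalL]
    dsimp only [ofList]
    split
    · next a ha =>
        split at ha
        · next h => rw [h]; exact (Sum.inr.injEq _ _ ▸ ha) ▸ rfl
        · exact absurd ha (by simp)
        · next h => exact absurd (List.getElem?_eq_none_iff.mp h) (Nat.not_le.mpr hi)
    · next Y Z hYZ =>
        split at hYZ
        · exact absurd hYZ (by simp)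
        · next y z h =>
            rw [Sum.inl.injEq, Prod.mk.injEq] at hYZ
            obtain ⟨h1, h2⟩ := hYZ
            rw [h]
            have hc := hwf i y z h
            dsimp only
            rw [dif_pos hc]
            rw [← h1, ← h2]
            exact congrArg₂ (· ++ ·) (ih y hc.1 (hc.1.trans hi)) (ih z hc.2 (hc.2.trans hi))
        · next h => exact absurd (List.getElem?_eq_none_iff.mp h) (Nat.not_le.mpr hi)

theorem WF_snoc {α : Type*} {M : List (Rule α)} (hwf : WF M) (r : Rule α)
    (hr : ∀ y z : ℕ, r = Sum.inl (y, z) → y < M.length ∧ z < M.length) :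
    WF (M ++ [r]) := by
  intro i y z hi
  rcases lt_trichotomy i M.length with h | h | h
  · rw [List.getElem?_append_left h] at hi; exact hwf i y z hi
  · subst h
    rw [List.getElem?_concat_length] at hi
    exact hr y z (Option.some.inj hi)
  · rw [List.getElem?_eq_none (by simp; omega)] at hi
    exact absurd hi (by simp)

theorem evalL_snoc {α : Type*} (M : List (Rule α)) (y z : ℕ)
    (hy : y < M.length) (hz : z < M.length) :
    evalL (M ++ [Sum.inl (y, z)]) M.length = evalL M y ++ evalL M z := by
  rw [evalL, List.getElem?_concat_length]
  dsimp only
  rw [dif_pos ⟨hy, hz⟩, evalL_prefix ⟨_, rfl⟩ y hy, evalL_prefix ⟨_, rfl⟩ z hz]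

def repExt (L : List (Rule Bool)) (f : ℕ) : ℕ → List (Rule Bool) × ℕ
  | 0 => (L, f)
  | 1 => (L, f)
  | (m + 2) =>
      let R := repExt L f ((m + 2) / 2)
      let L₂ := R.1 ++ [Sum.inl (R.2, R.2)]
      if (m + 2) % 2 = 0 then (L₂, R.1.length)
      else (L₂ ++ [Sum.inl (R.1.length, f)], L₂.length)
termination_by m => m
decreasing_by
  exact Nat.div_lt_self (by omega) (by omega)

theorem repExt_spec (L : List (Rule Bool)) (f : ℕ) (hf : f < L.length)
    (hwf : WF L) (hev : evalL L f = [false]) :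
    ∀ m, 1 ≤ m →
      L <+: (repExt L f m).1 ∧
      (repExt L f m).2 < (repExt L f m).1.length ∧
      WF (repExt L f m).1 ∧
      evalL (repExt L f m).1 (repExt L f m).2 = List.replicate m false ∧
      (repExt L f m).1.length ≤ L.length + 2 * Nat.clog 2 m := by
  intro m
  induction m using Nat.strong_induction_on with
  | _ m ih =>
    intro hm
    match m, hm with
    | 1, _ =>
        have hre : repExt L f 1 = (L, f) := by rw [repExt]
        rw [hre]
        exact ⟨List.prefix_refl _, hf, hwf, by simpa using hev, by simp⟩
    | (m + 2), _ =>
        have hq1 : 1 ≤ (m + 2) / 2 := by omega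
        have hqlt : (m + 2) / 2 < m + 2 := by omega
        obtain ⟨hpre, htop, hwf1, hev1, hlen1⟩ := ih _ hqlt hq1
        set q := (m + 2) / 2 with hqdef
        set R := repExt L f q with hR
        set L₂ := R.1 ++ [Sum.inl (R.2, R.2)] with hL₂
        have hLlen : L.length ≤ R.1.length := hpre.length_le
        have hpre₂ : R.1 <+: L₂ := ⟨_, rfl⟩
        have hwf₂ : WF L₂ := WF_snoc hwf1 _ (by
          rintro y z hyz
          rw [Sum.inl.injEq, Prod.mk.injEq] at hyz
          exact ⟨hyz.1 ▸ htop, hyz.2 ▸ htop⟩)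
        have hev₂ : evalL L₂ R.1.length = List.replicate (2 * q) false := by
          rw [hL₂, evalL_snoc _ _ _ htop htop, hev1, ← List.replicate_add]
          congr 1; omega
        have hL₂len : L₂.length = R.1.length + 1 := by simp [hL₂]
        have hclog : Nat.clog 2 (m + 2) = Nat.clog 2 ((m + 2 + 1) / 2) + 1 := by
          rw [Nat.clog_of_two_le (by norm_num) (by omega)]
          congr 2
        rcases Nat.even_or_odd (m + 2) with he | ho
        · -- even : m + 2 = 2 * q
          have h2q : m + 2 = 2 * q := by
            obtain ⟨r, hr⟩ := he; omega
          have hmod : (m + 2) % 2 = 0 := by omega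
          have hre : repExt L f (m + 2) = (L₂, R.1.length) := by
            rw [repExt]; simp only [hmod, ← hqdef, ← hR, ← hL₂, if_true]
          rw [hre]
          refine ⟨hpre.trans hpre₂, by simp [hL₂], hwf₂, by rw [hev₂, ← h2q], ?_⟩
          have hcq : Nat.clog 2 q + 1 ≤ Nat.clog 2 (m + 2) := by
            rw [hclog]
            have : q ≤ (m + 2 + 1) / 2 := by omega
            have := Nat.clog_mono_right 2 this
            omega
          simp only [hL₂len]
          omega
        · -- odd : m + 2 = 2 * q + 1
          have h2q : m + 2 = 2 * q + 1 := by
            obtain ⟨r, hr⟩ := ho; omega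
          have hmod : ¬ (m + 2) % 2 = 0 := by omega
          have hre : repExt L f (m + 2) = (L₂ ++ [Sum.inl (R.1.length, f)], L₂.length) := by
            rw [repExt]; simp only [hmod, ← hqdef, ← hR, ← hL₂, if_false]
          rw [hre]
          have hfL₂ : f < L₂.length := by omega
          have hRlen : R.1.length < L₂.length := by omega
          have hwf₃ : WF (L₂ ++ [Sum.inl (R.1.length, f)]) := WF_snoc hwf₂ _ (by
            rintro y z hyz
            rw [Sum.inl.injEq, Prod.mk.injEq] at hyz
            exact ⟨hyz.1 ▸ hRlen, hyz.2 ▸ hfL₂⟩)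
          have hev₃ : evalL (L₂ ++ [Sum.inl (R.1.length, f)]) L₂.length
              = List.replicate (m + 2) false := by
            rw [evalL_snoc _ _ _ hRlen hfL₂, hev₂,
              evalL_prefix (hpre.trans hpre₂) f hf, hev, h2q]
            rw [← List.replicate_succ']
          refine ⟨(hpre.trans hpre₂).trans ⟨_, rfl⟩, by simp, hwf₃, hev₃, ?_⟩
          have hcq : Nat.clog 2 q + 1 ≤ Nat.clog 2 (m + 2) := by
            rw [hclog]
            have : q ≤ (m + 2 + 1) / 2 := by omega
            have := Nat.clog_mono_right 2 this
            omega
          simp only [List.length_append, List.length_singleton, hL₂len]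
          omega

theorem expand_eq_inr {α : Type*} (P : SLP α) (X : Fin P.g) (a : α)
    (h : P.rhs X = Sum.inr a) : P.expand X = [a] := by
  rw [SLP.expand]
  split
  · next h' => rw [h] at h'; cases h'; rfl
  · next Y Z h' => rw [h] at h'; cases h'

theorem expand_eq_inl {α : Type*} (P : SLP α) (X Y Z : Fin P.g)
    (h : P.rhs X = Sum.inl (Y, Z)) : P.expand X = P.expand Y ++ P.expand Z := by
  rw [SLP.expand]
  split
  · next h' => rw [h] at h'; cases h'
  · next Y' Z' h' => rw [h] at h'; cases h'; rfl

def shiftR {g : ℕ} (r : (Fin g × Fin g) ⊕ Bool) : Rule Bool :=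
  match r with
  | Sum.inl (y, z) => Sum.inl (y.1 + 2, z.1 + 2)
  | Sum.inr b => Sum.inl (0, if b then 0 else 1)

def coreL (P : SLP Bool) : List (Rule Bool) :=
  Sum.inr true :: Sum.inr false :: List.ofFn (fun i : Fin P.g => shiftR (P.rhs i))

theorem coreL_length (P : SLP Bool) : (coreL P).length = P.g + 2 := by
  simp [coreL]

theorem coreL_get (P : SLP Bool) (i : ℕ) (hi : i < P.g) :
    (coreL P)[i + 2]? = some (shiftR (P.rhs ⟨i, hi⟩)) := by
  simp [coreL, List.getElem?_cons_succ, List.getElem?_ofFn, hi]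

theorem evalL_core0 (P : SLP Bool) : evalL (coreL P) 0 = [true] := by
  have h : (coreL P)[0]? = some (Sum.inr true) := by simp [coreL]
  rw [evalL, h]

theorem evalL_core1 (P : SLP Bool) : evalL (coreL P) 1 = [false] := by
  have h : (coreL P)[1]? = some (Sum.inr false) := by simp [coreL]
  rw [evalL, h]

theorem WF_coreL (P : SLP Bool) : WF (coreL P) := by
  intro i y z hi
  match i with
  | 0 => exact absurd hi (by rw [show (coreL P)[0]? = some (Sum.inr true) from by simp [coreL]]; simp)
  | 1 => exact absurd hi (by rw [show (coreL P)[1]? = some (Sum.inr false) from by simp [coreL]]; simp)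
  | (j + 2) =>
      by_cases hj : j < P.g
      · rw [coreL_get P j hj] at hi
        rcases h : P.rhs ⟨j, hj⟩ with ⟨Y, Z⟩ | b
        · rw [h] at hi
          dsimp only [shiftR] at hi
          have hY : (Y : ℕ) < j := (P.acyclic _ _ _ h).1
          have hZ : (Z : ℕ) < j := (P.acyclic _ _ _ h).2
          rw [Option.some.injEq, Sum.inl.injEq, Prod.mk.injEq] at hi
          omega
        · rw [h] at hi
          dsimp only [shiftR] at hi
          rw [Option.some.injEq, Sum.inl.injEq, Prod.mk.injEq] at hi
          rcases b <;> simp at hi <;> omega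
      · have : (coreL P)[j + 2]? = none := by
          rw [List.getElem?_eq_none]
          rw [coreL_length]; omega
        rw [this] at hi; exact absurd hi (by simp)

theorem evalL_coreL (P : SLP Bool) :
    ∀ i (hi : i < P.g), evalL (coreL P) (i + 2) = (P.expand ⟨i, hi⟩).flatMap δp := by
  intro i
  induction i using Nat.strong_induction_on with
  | _ i ih =>
    intro hi
    rw [evalL, coreL_get P i hi]
    rcases h : P.rhs ⟨i, hi⟩ with ⟨Y, Z⟩ | b
    · rw [expand_eq_inl P _ Y Z h]
      dsimp only [shiftR]
      have hY : (Y : ℕ) < i := (P.acyclic _ _ _ h).1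
      have hZ : (Z : ℕ) < i := (P.acyclic _ _ _ h).2
      rw [dif_pos ⟨by omega, by omega⟩, List.flatMap_append]
      exact congrArg₂ (· ++ ·) (ih Y.1 hY Y.2) (ih Z.1 hZ Z.2)
    · rw [expand_eq_inr P _ b h]
      rcases b
      · dsimp only [shiftR]
        simp only [Bool.false_eq_true, if_false]
        rw [dif_pos ⟨by omega, by omega⟩, evalL_core0, evalL_core1]
        simp [δp]
      · dsimp only [shiftR]
        simp only [if_true]
        rw [dif_pos ⟨by omega, by omega⟩, evalL_core0]
        simp [δp]

end St13

theorem stmt13 (S : List Bool) (g : ℕ) (h : ∃ P : SLP Bool, P.g = g ∧ P.Generates S) :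
    ∃ Q : SLP Bool,
      Q.g ≤ g + 2 * Nat.clog 2 (2 * S.count true + 1) + 4 ∧
      Q.Generates (ΔEx S) := by
  obtain ⟨P, hPg, X, hX⟩ := h
  set m := 2 * S.count true + 1 with hm
  have hm1 : 1 ≤ m := by omega
  have hcl := St13.coreL_length P
  have hf1 : 1 < (St13.coreL P).length := by omega
  obtain ⟨hpre, htop, hwfR, hevR, hlenR⟩ :=
    St13.repExt_spec (St13.coreL P) 1 hf1 (St13.WF_coreL P) (St13.evalL_core1 P) m hm1
  set R := St13.repExt (St13.coreL P) 1 m with hR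
  have hclR : (St13.coreL P).length ≤ R.1.length := hpre.length_le
  have hXlen : X.1 + 2 < R.1.length := by
    have := X.2; omega
  set F₁ : List (St13.Rule Bool) := R.1 ++ [Sum.inl (X.1 + 2, R.2)] with hF₁
  set F : List (St13.Rule Bool) := F₁ ++ [Sum.inl (0, R.1.length)] with hF
  have hF₁len : F₁.length = R.1.length + 1 := by simp [hF₁]
  have hwfF₁ : St13.WF F₁ := St13.WF_snoc hwfR _ (by
    rintro y z hyz
    rw [Sum.inl.injEq, Prod.mk.injEq] at hyz
    exact ⟨hyz.1 ▸ hXlen, hyz.2 ▸ htop⟩)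
  have hwfF : St13.WF F := St13.WF_snoc hwfF₁ _ (by
    rintro y z hyz
    rw [Sum.inl.injEq, Prod.mk.injEq] at hyz
    refine ⟨hyz.1 ▸ (by omega), hyz.2 ▸ (by omega)⟩)
  have hbody : St13.evalL F₁ R.1.length = S.flatMap δp ++ List.replicate m false := by
    rw [hF₁, St13.evalL_snoc R.1 _ _ hXlen htop,
      St13.evalL_prefix hpre (X.1 + 2) (by omega), hevR]
    congr 1
    exact (St13.evalL_coreL P X.1 X.2).trans (by rw [show (⟨X.1, X.2⟩ : Fin P.g) = X from rfl, hX])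
  have hroot : St13.evalL F F₁.length = ΔEx S := by
    rw [hF, St13.evalL_snoc F₁ 0 R.1.length (by omega) (by omega)]
    rw [St13.evalL_prefix (hF₁ ▸ ⟨_, rfl⟩ : R.1 <+: F₁) 0 (by omega),
      St13.evalL_prefix hpre 0 (by omega), St13.evalL_core0, hbody]
    rfl
  have hFlen : F.length = R.1.length + 2 := by simp [hF, hF₁]
  refine ⟨St13.ofList F hwfF, ?_, ⟨⟨F₁.length, by show F₁.length < F.length; omega⟩, ?_⟩⟩
  · show F.length ≤ _
    omega
  · exact (St13.expand_ofList F hwfF ⟨F₁.length, by show F₁.length < F.length; omega⟩).trans hroot
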